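/- Let p > 6 be a prime, θ = π/p, and let A(p) = (A_yes(p), A_no(p)) be the promise problem over the unary alphabet {a} with A_yes(p) = {a^k : cos²((k mod p)·θ) ≥ 2/3} and A_no(p) = {a^k : cos²((k mod p)·θ) ≤ 1/3}. Then there exists a PFA with p states (indeed, a deterministic one) solving A(p) exactly, and for every ε with 0 ≤ ε < 1/2, every PFA that solves A(p) with error probability ε has at least p states; that is, the minimal PFA solving A(p) has exactly p states. -/

import Mathlib

open Filter Finset Matrix

/-- If `‖∑_{j≤m} C(k,j) a j‖ ≤ C` for all large `k` and `m ≥ 1`, then `a m = 0`. -/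
lemma bounded_choose_sum : ∀ (m : ℕ), 1 ≤ m → ∀ (a : ℕ → ℂ) (C : ℝ) (K : ℕ),
    (∀ k, K ≤ k → ‖∑ j ∈ Finset.range (m+1), (k.choose j : ℂ) * a j‖ ≤ C) → a m = 0 := by
  intro m
  induction m with
  | zero => intro h; exact absurd h (by norm_num)
  | succ m ih =>
    intro _ a C K h
    by_cases hm0 : m = 0
    · subst hm0
      by_contra ha
      have ha' : 0 < ‖a 1‖ := norm_pos_iff.mpr ha
      obtain ⟨k, hk⟩ := exists_nat_gt ((C + ‖a 0‖) / ‖a 1‖)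
      set k' := max k K with hk'
      have h1 := h k' (le_max_right _ _)
      have hsum : ∑ j ∈ Finset.range 2, (k'.choose j : ℂ) * a j = a 0 + (k' : ℂ) * a 1 := by
        simp [Finset.sum_range_succ]
      rw [hsum] at h1
      have h2 : ‖(k' : ℂ) * a 1‖ ≤ C + ‖a 0‖ := by
        calc ‖(k' : ℂ) * a 1‖ = ‖(a 0 + (k' : ℂ) * a 1) + (- a 0)‖ := by ring_nf
          _ ≤ ‖a 0 + (k' : ℂ) * a 1‖ + ‖a 0‖ := by
              simpa using norm_add_le (a 0 + (k' : ℂ) * a 1) (-a 0)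
          _ ≤ C + ‖a 0‖ := by linarith
      have h3 : (k' : ℝ) * ‖a 1‖ ≤ C + ‖a 0‖ := by
        simpa [norm_mul, Complex.norm_natCast] using h2
      have h4 : (C + ‖a 0‖) / ‖a 1‖ < (k' : ℝ) := lt_of_lt_of_le hk (by exact_mod_cast le_max_left k K)
      rw [div_lt_iff₀ ha'] at h4
      linarith
    · have hm1 : 1 ≤ m := Nat.one_le_iff_ne_zero.mpr hm0
      have key : ∀ k, K ≤ k →
          ∑ j ∈ Finset.range (m+1), (k.choose j : ℂ) * a (j+1)
            = (∑ j ∈ Finset.range (m+1+1), ((k+1).choose j : ℂ) * a j)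
              - ∑ j ∈ Finset.range (m+1+1), (k.choose j : ℂ) * a j := by
        intro k _
        have step : ∑ j ∈ Finset.range (m+1+1),
            (((k+1).choose j : ℂ) * a j - (k.choose j : ℂ) * a j)
            = ∑ j ∈ Finset.range (m+1), (k.choose j : ℂ) * a (j+1) := by
          rw [Finset.sum_range_succ']
          have h1 : ∀ j ∈ Finset.range (m+1),
              (((k+1).choose (j+1) : ℂ) * a (j+1) - (k.choose (j+1) : ℂ) * a (j+1))
                = (k.choose j : ℂ) * a (j+1) := by
            intro j _
            rw [Nat.choose_succ_succ]
            push_cast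
            ring
          rw [Finset.sum_congr rfl h1]
          simp
        rw [← Finset.sum_sub_distrib, step]
      apply ih hm1 (fun j => a (j+1)) (C + C) K
      intro k hk
      rw [key k hk]
      calc ‖_ - _‖ ≤ ‖∑ j ∈ Finset.range (m+1+1), ((k+1).choose j : ℂ) * a j‖
            + ‖∑ j ∈ Finset.range (m+1+1), (k.choose j : ℂ) * a j‖ := norm_sub_le _ _
        _ ≤ C + C := add_le_add (h (k+1) (by omega)) (h k hk)

variable {n : ℕ}

section Stoch

variable {M : Matrix (Fin n) (Fin n) ℝ}

lemma pow_entry_nonneg (hM0 : ∀ i j, 0 ≤ M i j) : ∀ k i j, 0 ≤ (M ^ k) i j := by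
  intro k
  induction k with
  | zero => intro i j; by_cases h : i = j <;> simp [h, Matrix.one_apply]
  | succ k ih =>
    intro i j
    rw [pow_succ, Matrix.mul_apply]
    exact Finset.sum_nonneg fun l _ => mul_nonneg (ih i l) (hM0 l j)

lemma pow_row_sum (hM1 : ∀ i, ∑ j, M i j = 1) : ∀ k i, ∑ j, (M ^ k) i j = 1 := by
  intro k
  induction k with
  | zero => intro i; simp [Matrix.one_apply]
  | succ k ih =>
    intro i
    simp only [pow_succ, Matrix.mul_apply]
    rw [Finset.sum_comm]
    calc ∑ l, ∑ j, (M ^ k) i l * M l j = ∑ l, (M ^ k) i l * ∑ j, M l j := by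
          simp [Finset.mul_sum]
      _ = 1 := by simp only [hM1, mul_one]; exact ih i

lemma pow_entry_le_one (hM0 : ∀ i j, 0 ≤ M i j) (hM1 : ∀ i, ∑ j, M i j = 1) :
    ∀ k i j, (M ^ k) i j ≤ 1 := by
  intro k i j
  have := pow_row_sum hM1 k i
  calc (M ^ k) i j ≤ ∑ l, (M ^ k) i l :=
        Finset.single_le_sum (fun l _ => pow_entry_nonneg hM0 k i l) (Finset.mem_univ j)
    _ = 1 := this

lemma cmplx_pow (M : Matrix (Fin n) (Fin n) ℝ) :
    ∀ k, (M.map (Complex.ofRealHom : ℝ → ℂ)) ^ k = (M ^ k).map Complex.ofRealHom := by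
  intro k
  induction k with
  | zero => simp [Matrix.map_one]
  | succ k ih => rw [pow_succ, pow_succ, ih, Matrix.map_mul]

lemma mulVec_bound (hM0 : ∀ i j, 0 ≤ M i j) (hM1 : ∀ i, ∑ j, M i j = 1)
    (x : Fin n → ℂ) (k : ℕ) (i : Fin n) :
    ‖(((M.map (Complex.ofRealHom : ℝ → ℂ)) ^ k) *ᵥ x) i‖ ≤ ∑ j, ‖x j‖ := by
  rw [cmplx_pow]
  calc ‖∑ j, ((M ^ k).map Complex.ofRealHom) i j * x j‖
      ≤ ∑ j, ‖((M ^ k).map Complex.ofRealHom) i j * x j‖ := norm_sum_le _ _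
    _ ≤ ∑ j, ‖x j‖ := by
        apply Finset.sum_le_sum
        intro j _
        rw [norm_mul]
        have h1 : ‖((M ^ k).map Complex.ofRealHom) i j‖ ≤ 1 := by
          simp only [Matrix.map_apply, Complex.ofRealHom_eq_coe, Complex.norm_real]
          rw [Real.norm_eq_abs, abs_of_nonneg (pow_entry_nonneg hM0 k i j)]
          exact pow_entry_le_one hM0 hM1 k i j
        calc ‖((M ^ k).map Complex.ofRealHom) i j‖ * ‖x j‖ ≤ 1 * ‖x j‖ :=
              mul_le_mul_of_nonneg_right h1 (norm_nonneg _)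
          _ = ‖x j‖ := one_mul _

end Stoch

section Eigen

variable {M : Matrix (Fin n) (Fin n) ℝ}

lemma eig_norm_le (hM0 : ∀ i j, 0 ≤ M i j) (hM1 : ∀ i, ∑ j, M i j = 1)
    {x : Fin n → ℂ} (hx : x ≠ 0) {μ : ℂ}
    (heig : (M.map (Complex.ofRealHom : ℝ → ℂ)) *ᵥ x = μ • x) : ‖μ‖ ≤ 1 := by
  have hnn : n ≠ 0 := by rintro rfl; exact hx (funext fun i => i.elim0)
  haveI : NeZero n := ⟨hnn⟩
  have hne : (Finset.univ : Finset (Fin n)).Nonempty := Finset.univ_nonempty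
  obtain ⟨i0, _, hi0⟩ := Finset.exists_max_image Finset.univ (fun i => ‖x i‖) hne
  set c := ‖x i0‖ with hc
  have hcpos : 0 < c := by
    by_contra hcon
    push_neg at hcon
    apply hx
    funext i
    have := hi0 i (Finset.mem_univ i)
    have : ‖x i‖ ≤ 0 := le_trans this hcon
    simpa using le_antisymm this (norm_nonneg _)
  have hcomp : ((M.map (Complex.ofRealHom : ℝ → ℂ)) *ᵥ x) i0 = μ * x i0 := by
    rw [heig]; rfl
  have hb : ‖((M.map (Complex.ofRealHom : ℝ → ℂ)) *ᵥ x) i0‖ ≤ c := by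
    calc ‖∑ j, (M.map (Complex.ofRealHom : ℝ → ℂ)) i0 j * x j‖
        ≤ ∑ j, ‖(M.map (Complex.ofRealHom : ℝ → ℂ)) i0 j * x j‖ := norm_sum_le _ _
      _ ≤ ∑ j, M i0 j * c := by
          apply Finset.sum_le_sum
          intro j _
          rw [norm_mul]
          simp only [Matrix.map_apply, Complex.ofRealHom_eq_coe, Complex.norm_real,
            Real.norm_eq_abs, abs_of_nonneg (hM0 i0 j)]
          exact mul_le_mul_of_nonneg_left (hi0 j (Finset.mem_univ j)) (hM0 i0 j)
      _ = c := by rw [← Finset.sum_mul, hM1 i0, one_mul]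
  rw [hcomp, norm_mul] at hb
  exact le_of_mul_le_mul_right (by linarith : ‖μ‖ * c ≤ 1 * c) hcpos

lemma eig_unit_root (hM0 : ∀ i j, 0 ≤ M i j) (hM1 : ∀ i, ∑ j, M i j = 1)
    {x : Fin n → ℂ} (hx : x ≠ 0) {μ : ℂ}
    (heig : (M.map (Complex.ofRealHom : ℝ → ℂ)) *ᵥ x = μ • x) (hμ : ‖μ‖ = 1) :
    μ ^ (Nat.factorial n) = 1 := by
  have hnn : n ≠ 0 := by rintro rfl; exact hx (funext fun i => i.elim0)
  haveI : NeZero n := ⟨hnn⟩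
  have hne : (Finset.univ : Finset (Fin n)).Nonempty := Finset.univ_nonempty
  obtain ⟨i0, _, hi0⟩ := Finset.exists_max_image Finset.univ (fun i => ‖x i‖) hne
  set c := ‖x i0‖ with hc
  have hcpos : 0 < c := by
    by_contra hcon
    push_neg at hcon
    apply hx
    funext i
    have h1 := hi0 i (Finset.mem_univ i)
    have h2 : ‖x i‖ ≤ 0 := le_trans h1 hcon
    simpa using le_antisymm h2 (norm_nonneg _)
  have hμ0 : μ ≠ 0 := by
    intro h; rw [h] at hμ; simp at hμ
  -- the alignment claim
  have claim : ∀ i, ‖x i‖ = c → ∀ j, M i j ≠ 0 → x j = μ * x i := by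
    intro i hi j hj
    set u := μ * x i with hu
    have huc : ‖u‖ = c := by rw [hu, norm_mul, hμ, one_mul, hi]
    have h1 : ∑ l, ((M i l : ℂ)) * x l = μ * x i := by
      have := congrFun heig i
      simpa [Matrix.mulVec, dotProduct, Matrix.map_apply] using this
    have h2 : ∑ l, ((M i l : ℂ)) * u = u := by
      rw [← Finset.sum_mul]
      have h3 : ∑ l, ((M i l : ℝ) : ℂ) = 1 := by
        rw [← Complex.ofReal_sum, hM1 i, Complex.ofReal_one]
      rw [h3, one_mul]
    have hrow : ∑ l, ((M i l : ℂ)) * (x l - u) = 0 := by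
      simp only [mul_sub]
      rw [Finset.sum_sub_distrib, h1, h2, hu, sub_self]
    have hnsu : Complex.normSq u = c ^ 2 := by
      rw [← Complex.sq_norm]
      rw [huc]
    have hre : ∑ l, (M i l) * ((x l * (starRingEnd ℂ) u).re - c ^ 2) = 0 := by
      have h4 : (∑ l, ((M i l : ℂ)) * (x l - u)) * (starRingEnd ℂ) u = 0 := by
        rw [hrow, zero_mul]
      rw [Finset.sum_mul] at h4
      have h5 := congrArg Complex.re h4
      rw [Complex.re_sum, Complex.zero_re] at h5
      have h6 : ∀ l ∈ Finset.univ,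
          ((M i l : ℂ) * (x l - u) * (starRingEnd ℂ) u).re
            = (M i l) * ((x l * (starRingEnd ℂ) u).re - c ^ 2) := by
        intro l _
        have he : (M i l : ℂ) * (x l - u) * (starRingEnd ℂ) u
            = (M i l : ℂ) * (x l * (starRingEnd ℂ) u - u * (starRingEnd ℂ) u) := by ring
        rw [he, Complex.re_ofReal_mul]
        congr 1
        rw [Complex.sub_re]
        congr 1
        rw [Complex.mul_conj, hnsu]
        simp [← Complex.ofReal_pow]
      calc ∑ l, (M i l) * ((x l * (starRingEnd ℂ) u).re - c ^ 2)
          = ∑ l, ((M i l : ℂ) * (x l - u) * (starRingEnd ℂ) u).re :=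
            Finset.sum_congr rfl fun l hl => (h6 l hl).symm
        _ = 0 := h5
    have hterm : ∀ l ∈ Finset.univ, (M i l) * ((x l * (starRingEnd ℂ) u).re - c ^ 2) ≤ 0 := by
      intro l _
      apply mul_nonpos_of_nonneg_of_nonpos (hM0 i l)
      have h6 : (x l * (starRingEnd ℂ) u).re ≤ ‖x l * (starRingEnd ℂ) u‖ := Complex.re_le_norm _
      have h7 : ‖x l * (starRingEnd ℂ) u‖ = ‖x l‖ * c := by
        rw [norm_mul, RCLike.norm_conj, huc]
      have h8 : ‖x l‖ ≤ c := hi0 l (Finset.mem_univ l)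
      nlinarith [norm_nonneg (x l)]
    have hj0 := (Finset.sum_eq_zero_iff_of_nonpos hterm).mp hre j (Finset.mem_univ j)
    have hj1 : (x j * (starRingEnd ℂ) u).re = c ^ 2 := by
      rcases mul_eq_zero.mp hj0 with h | h
      · exact absurd h hj
      · linarith
    have hj2 : Complex.normSq (x j - u) = 0 := by
      have h9 := Complex.normSq_sub (x j) u
      have h10 : Complex.normSq (x j) ≤ c ^ 2 := by
        rw [← Complex.sq_norm]
        have := hi0 j (Finset.mem_univ j)
        nlinarith [norm_nonneg (x j)]
      have h11 : 0 ≤ Complex.normSq (x j - u) := Complex.normSq_nonneg _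
      nlinarith
    have h12 := sub_eq_zero.mp ((Complex.normSq_eq_zero).mp hj2)
    rw [h12, hu]
  -- successor function
  have hex : ∀ i, ∃ j, M i j ≠ 0 := by
    intro i
    by_contra hcon
    push_neg at hcon
    have h1 := hM1 i
    rw [Finset.sum_eq_zero (fun j _ => hcon j)] at h1
    norm_num at h1
  choose g hg using hex
  have hiter : ∀ t, ‖x (g^[t] i0)‖ = c ∧ x (g^[t] i0) = μ ^ t * x i0 := by
    intro t
    induction t with
    | zero => exact ⟨by simp [hc], by simp⟩
    | succ t ih =>
      obtain ⟨ih1, ih2⟩ := ih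
      rw [Function.iterate_succ_apply']
      have h1 := claim _ ih1 _ (hg (g^[t] i0))
      constructor
      · rw [h1, norm_mul, hμ, one_mul, ih1]
      · rw [h1, ih2, pow_succ]; ring
  have hxi0 : x i0 ≠ 0 := by
    intro h
    rw [hc, h] at hcpos
    simp at hcpos
  -- pigeonhole
  have hfinal : ∀ s t : ℕ, s < t → t ≤ n → g^[s] i0 = g^[t] i0 → μ ^ (Nat.factorial n) = 1 := by
    intro s t hst htn hgeq
    have h1 : μ ^ s * x i0 = μ ^ t * x i0 := by
      rw [← (hiter s).2, ← (hiter t).2, hgeq]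
    have h2 : μ ^ s = μ ^ t := mul_right_cancel₀ hxi0 h1
    have h3 : μ ^ t = μ ^ s * μ ^ (t - s) := by
      rw [← pow_add]
      congr 1
      omega
    have h4 : μ ^ (t - s) = 1 := by
      have h5 : μ ^ s * 1 = μ ^ s * μ ^ (t - s) := by rw [mul_one, ← h3, h2]
      exact (mul_left_cancel₀ (pow_ne_zero s hμ0) h5).symm
    have hdvd : (t - s) ∣ Nat.factorial n := Nat.dvd_factorial (by omega) (by omega)
    calc μ ^ (Nat.factorial n) = μ ^ ((t - s) * (Nat.factorial n / (t - s))) := by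
          rw [Nat.mul_div_cancel' hdvd]
      _ = (μ ^ (t - s)) ^ (Nat.factorial n / (t - s)) := by rw [pow_mul]
      _ = 1 := by rw [h4, one_pow]
  have hcard : (Finset.univ : Finset (Fin n)).card < (Finset.range (n+1)).card := by simp
  obtain ⟨s, hs, t, ht, hst, hgeq⟩ :=
    Finset.exists_ne_map_eq_of_card_lt_of_maps_to hcard
      (f := fun a => g^[a] i0) (fun a _ => Finset.mem_univ _)
  rw [Finset.mem_range] at hs ht
  rcases lt_or_gt_of_ne hst with h | h
  · exact hfinal s t h (by omega) hgeq
  · exact hfinal t s h (by omega) hgeq.symm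

end Eigen

section Key

variable {M : Matrix (Fin n) (Fin n) ℝ}

lemma matrix_binom (A : Matrix (Fin n) (Fin n) ℂ) (μ : ℂ) (k : ℕ) :
    A ^ k = ∑ j ∈ Finset.range (k+1),
      ((k.choose j : ℂ) * μ ^ (k - j)) • (A - μ • 1) ^ j := by
  set B := A - μ • (1 : Matrix (Fin n) (Fin n) ℂ) with hB
  have hA : A = B + μ • 1 := by rw [hB, sub_add_cancel]
  have hcomm : Commute B (μ • (1 : Matrix (Fin n) (Fin n) ℂ)) :=
    (Commute.one_right B).smul_right μ
  rw [hA, hcomm.add_pow]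
  apply Finset.sum_congr rfl
  intro j _
  rw [smul_pow, one_pow, mul_smul_comm, mul_one,
    (Nat.commute_cast (μ ^ (k - j) • B ^ j) (k.choose j)).eq,
    ← nsmul_eq_mul, mul_smul, Nat.cast_smul_eq_nsmul ℂ]

lemma pow_lin_eq (A : Matrix (Fin n) (Fin n) ℂ) (μ : ℂ) :
    ∀ (j : ℕ) (y : Fin n → ℂ),
      ((Matrix.mulVecLin A - μ • 1) ^ j) y = ((A - μ • 1) ^ j) *ᵥ y := by
  have hbase : ∀ y, (Matrix.mulVecLin A - μ • 1) y
      = (A - μ • (1 : Matrix (Fin n) (Fin n) ℂ)) *ᵥ y := by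
    intro y
    simp [Matrix.sub_mulVec, Matrix.smul_mulVec, Matrix.one_mulVec]
  intro j
  induction j with
  | zero => intro y; simp [Matrix.one_mulVec]
  | succ j ih =>
    intro y
    rw [pow_succ', pow_succ']
    rw [Module.End.mul_apply, hbase, ← Matrix.mulVec_mulVec, ih y]

lemma sum_mulVec' {ι : Type*} [DecidableEq ι] (s : Finset ι) (f : ι → Matrix (Fin n) (Fin n) ℂ)
    (y : Fin n → ℂ) :
    (∑ j ∈ s, f j) *ᵥ y = ∑ j ∈ s, (f j) *ᵥ y := by
  induction s using Finset.induction_on with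
  | empty => simp [Matrix.zero_mulVec]
  | insert _ _ h ih => rw [Finset.sum_insert h, Finset.sum_insert h, Matrix.add_mulVec, ih]

lemma key_tendsto (hM0 : ∀ i j, 0 ≤ M i j) (hM1 : ∀ i, ∑ j, M i j = 1) (x : Fin n → ℂ) :
    Filter.Tendsto (fun k =>
        ((M.map (Complex.ofRealHom : ℝ → ℂ)) ^ (k + Nat.factorial n)) *ᵥ x
        - ((M.map (Complex.ofRealHom : ℝ → ℂ)) ^ k) *ᵥ x) Filter.atTop (nhds 0) := by
  set A := M.map (Complex.ofRealHom : ℝ → ℂ) with hA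
  set d := Nat.factorial n with hd
  let V : Submodule ℂ (Fin n → ℂ) :=
    { carrier := {y | Filter.Tendsto (fun k => (A ^ (k + d)) *ᵥ y - (A ^ k) *ᵥ y)
        Filter.atTop (nhds 0)}
      add_mem' := by
        intro a b ha hb
        have := Filter.Tendsto.add ha hb
        rw [add_zero] at this
        apply this.congr
        intro k
        simp only [Matrix.mulVec_add]
        abel
      zero_mem' := by
        simp only [Set.mem_setOf_eq, Matrix.mulVec_zero, sub_zero]
        exact tendsto_const_nhds
      smul_mem' := by
        intro cc y hy
        have := hy.const_smul cc
        rw [smul_zero] at this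
        apply this.congr
        intro k
        simp only [Matrix.mulVec_smul, smul_sub] }
  suffices hsup : ∀ μ : ℂ, Module.End.maxGenEigenspace (Matrix.mulVecLin A) μ ≤ V by
    have h1 : (⊤ : Submodule ℂ (Fin n → ℂ)) ≤ V := by
      rw [← Module.End.iSup_maxGenEigenspace_eq_top (Matrix.mulVecLin A)]
      exact iSup_le hsup
    exact h1 Submodule.mem_top
  intro μ y hy
  obtain ⟨K, hK⟩ := (Module.End.mem_maxGenEigenspace _ _ _).mp hy
  rw [pow_lin_eq] at hK
  set B := A - μ • (1 : Matrix (Fin n) (Fin n) ℂ) with hB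
  have hBzero : ∀ j, K ≤ j → (B ^ j) *ᵥ y = 0 := by
    intro j hj
    have h1 : B ^ j = B ^ (j - K) * B ^ K := by rw [← pow_add]; congr 1; omega
    rw [h1, ← Matrix.mulVec_mulVec, hK, Matrix.mulVec_zero]
  show Filter.Tendsto (fun k => (A ^ (k + d)) *ᵥ y - (A ^ k) *ᵥ y) Filter.atTop (nhds 0)
  have hb_mulvec : ∀ k, (A ^ k) *ᵥ y
      = ∑ j ∈ Finset.range (k+1), ((k.choose j : ℂ) * μ ^ (k - j)) • ((B ^ j) *ᵥ y) := by
    intro k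
    rw [matrix_binom A μ k, ← hB]
    rw [sum_mulVec']
    exact Finset.sum_congr rfl fun j _ => Matrix.smul_mulVec _ _ _
  rcases lt_trichotomy ‖μ‖ 1 with hlt | heqμ | hgt
  · -- ‖μ‖ < 1 : A^k y → 0
    have hzero : Filter.Tendsto (fun k => (A ^ k) *ᵥ y) Filter.atTop (nhds 0) := by
      by_cases hμ0 : μ = 0
      · have hAB : A = B := by rw [hB, hμ0]; simp
        have hev : ∀ k ≥ K, (A ^ k) *ᵥ y = 0 := by
          intro k hk; rw [hAB]; exact hBzero k hk
        apply Filter.Tendsto.congr' ?_ (tendsto_const_nhds (x := (0 : Fin n → ℂ)))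
        filter_upwards [Filter.eventually_atTop.mpr ⟨K, hev⟩] with k hk
        exact hk.symm
      · have heval : ∀ k, K ≤ k → (A ^ k) *ᵥ y
            = ∑ j ∈ Finset.range K, ((k.choose j : ℂ) * μ ^ (k - j)) • ((B ^ j) *ᵥ y) := by
          intro k hk
          rw [hb_mulvec k]
          symm
          apply Finset.sum_subset
          · intro j hj
            rw [Finset.mem_range] at *
            omega
          · intro j hj1 hj2
            rw [Finset.mem_range] at hj1 hj2
            rw [hBzero j (by omega), smul_zero]
        have hsum0 : Filter.Tendsto
            (fun k => ∑ j ∈ Finset.range K, ((k.choose j : ℂ) * μ ^ (k - j)) • ((B ^ j) *ᵥ y))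
            Filter.atTop (nhds 0) := by
          have h0 : (0 : Fin n → ℂ) = ∑ j ∈ Finset.range K, (0 : Fin n → ℂ) := by simp
          rw [h0]
          apply tendsto_finset_sum
          intro j hj
          rw [Finset.mem_range] at hj
          have hc : Filter.Tendsto (fun k => ((k.choose j : ℂ) * μ ^ (k - j)))
              Filter.atTop (nhds 0) := by
            rw [tendsto_zero_iff_norm_tendsto_zero]
            have hg : Filter.Tendsto
                (fun k : ℕ => (‖μ‖ ^ j)⁻¹ * ((k : ℝ) ^ j * ‖μ‖ ^ k)) Filter.atTop (nhds 0) := by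
              have hs : Filter.Tendsto (fun k : ℕ => ((k : ℝ)) ^ j * ‖μ‖ ^ k)
                  Filter.atTop (nhds 0) := by
                apply Summable.tendsto_atTop_zero
                apply summable_pow_mul_geometric_of_norm_lt_one
                rw [Real.norm_eq_abs, abs_of_nonneg (norm_nonneg μ)]
                exact hlt
              have := hs.const_mul ((‖μ‖ ^ j)⁻¹)
              rwa [mul_zero] at this
            apply squeeze_zero' (Filter.Eventually.of_forall fun k => norm_nonneg _) ?_ hg
            filter_upwards [Filter.eventually_atTop.mpr ⟨j, fun k (hk : j ≤ k) => hk⟩] with k hjk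
            have hμpos : 0 < ‖μ‖ := norm_pos_iff.mpr hμ0
            rw [norm_mul, norm_pow, Complex.norm_natCast]
            rw [pow_sub₀ ‖μ‖ (ne_of_gt hμpos) hjk]
            have hch : ((k.choose j : ℝ)) ≤ (k : ℝ) ^ j := by
              calc ((k.choose j : ℝ)) ≤ (k : ℝ) ^ j / (j.factorial : ℝ) :=
                    Nat.choose_le_pow_div j k
                _ ≤ (k : ℝ) ^ j := by
                    apply div_le_self (by positivity)
                    exact_mod_cast Nat.one_le_iff_ne_zero.mpr (Nat.factorial_ne_zero j)
            calc (k.choose j : ℝ) * (‖μ‖ ^ k * (‖μ‖ ^ j)⁻¹)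
                ≤ (k : ℝ) ^ j * (‖μ‖ ^ k * (‖μ‖ ^ j)⁻¹) := by
                  apply mul_le_mul_of_nonneg_right hch
                  positivity
              _ = (‖μ‖ ^ j)⁻¹ * ((k : ℝ) ^ j * ‖μ‖ ^ k) := by ring
          have := hc.smul_const ((B ^ j) *ᵥ y)
          rwa [zero_smul] at this
        apply hsum0.congr'
        filter_upwards [Filter.eventually_atTop.mpr ⟨K, fun k (hk : K ≤ k) => hk⟩] with k hk
        exact (heval k hk).symm
    have hzero2 : Filter.Tendsto (fun k => (A ^ (k + d)) *ᵥ y) Filter.atTop (nhds 0) :=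
      hzero.comp (Filter.tendsto_add_atTop_nat d)
    have := hzero2.sub hzero
    rwa [sub_zero] at this
  · -- ‖μ‖ = 1
    by_cases hy0 : y = 0
    · rw [hy0]
      simp only [Matrix.mulVec_zero, sub_zero]
      exact tendsto_const_nhds
    · have hμ0 : μ ≠ 0 := by intro h; rw [h] at heqμ; simp at heqμ
      have hBy : B *ᵥ y = 0 := by
        by_contra hBy
        have hKex : ∃ m, (B ^ m) *ᵥ y = 0 := ⟨K, hK⟩
        set m := Nat.find hKex with hm
        have hm0 : (B ^ m) *ᵥ y = 0 := Nat.find_spec hKex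
        have hm2 : 2 ≤ m := by
          by_contra hcon
          push_neg at hcon
          interval_cases m
          · rw [pow_zero, Matrix.one_mulVec] at hm0; exact hy0 hm0
          · rw [pow_one] at hm0; exact hBy hm0
        set m' := m - 1 with hm'
        have hm'1 : 1 ≤ m' := by omega
        have hm'ne : (B ^ m') *ᵥ y ≠ 0 := Nat.find_min hKex (by omega)
        obtain ⟨i, hi⟩ := Function.ne_iff.mp hm'ne
        have hBzero' : ∀ j, m' + 1 ≤ j → (B ^ j) *ᵥ y = 0 := by
          intro j hj
          have h1 : B ^ j = B ^ (j - m) * B ^ m := by rw [← pow_add]; congr 1; omega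
          rw [h1, ← Matrix.mulVec_mulVec, hm0, Matrix.mulVec_zero]
        have heval : ∀ k, m' ≤ k → (A ^ k) *ᵥ y
            = ∑ j ∈ Finset.range (m' + 1), ((k.choose j : ℂ) * μ ^ (k - j)) • ((B ^ j) *ᵥ y) := by
          intro k hk
          rw [hb_mulvec k]
          symm
          apply Finset.sum_subset
          · intro j hj
            rw [Finset.mem_range] at *
            omega
          · intro j hj1 hj2
            rw [Finset.mem_range] at hj1 hj2
            rw [hBzero' j (by omega), smul_zero]
        have hbcs := bounded_choose_sum m' hm'1
          (fun j => (μ ^ j)⁻¹ * ((B ^ j *ᵥ y) i)) (∑ l, ‖y l‖) m' ?_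
        · have h2 : ((μ ^ m')⁻¹ : ℂ) ≠ 0 := inv_ne_zero (pow_ne_zero m' hμ0)
          exact hi (by
            rcases mul_eq_zero.mp hbcs with h | h
            · exact absurd h h2
            · exact h)
        · intro k hk
          have h1 : ∑ j ∈ Finset.range (m'+1), (k.choose j : ℂ) * ((μ ^ j)⁻¹ * ((B ^ j *ᵥ y) i))
              = (μ ^ k)⁻¹ * ((A ^ k *ᵥ y) i) := by
            rw [heval k hk]
            rw [Finset.sum_apply, Finset.mul_sum]
            apply Finset.sum_congr rfl
            intro j hj
            rw [Finset.mem_range] at hj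
            have hjk : j ≤ k := by omega
            rw [Pi.smul_apply, smul_eq_mul]
            rw [pow_sub₀ μ hμ0 hjk]
            field_simp
          rw [h1, norm_mul, norm_inv, norm_pow, heqμ, one_pow, inv_one, one_mul]
          exact mulVec_bound hM0 hM1 y k i
      have heigy : A *ᵥ y = μ • y := by
        have h1 : (A - μ • 1) *ᵥ y = 0 := by rw [← hB]; exact hBy
        rw [Matrix.sub_mulVec, Matrix.smul_mulVec, Matrix.one_mulVec,
          sub_eq_zero] at h1
        exact h1
      have hroot : μ ^ d = 1 := eig_unit_root hM0 hM1 hy0 heigy heqμ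
      have hpowy : ∀ k, (A ^ k) *ᵥ y = μ ^ k • y := by
        intro k
        induction k with
        | zero => simp [Matrix.one_mulVec]
        | succ k ih =>
          rw [pow_succ', ← Matrix.mulVec_mulVec, ih, Matrix.mulVec_smul, heigy,
            smul_smul, ← pow_succ]
      have hzero : ∀ k, (A ^ (k + d)) *ᵥ y - (A ^ k) *ᵥ y = 0 := by
        intro k
        rw [hpowy, hpowy, pow_add, hroot, mul_one, sub_self]
      simp only [hzero]
      exact tendsto_const_nhds
  · -- ‖μ‖ > 1 : y = 0
    have hy0 : y = 0 := by
      by_contra hy0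
      have hKex : ∃ m, (B ^ m) *ᵥ y = 0 := ⟨K, hK⟩
      set m := Nat.find hKex with hm
      have hm0 : (B ^ m) *ᵥ y = 0 := Nat.find_spec hKex
      have hm1 : 1 ≤ m := by
        by_contra hcon
        push_neg at hcon
        interval_cases m
        rw [pow_zero, Matrix.one_mulVec] at hm0
        exact hy0 hm0
      set z := (B ^ (m - 1)) *ᵥ y with hz
      have hzne : z ≠ 0 := Nat.find_min hKex (by omega)
      have hBz : B *ᵥ z = 0 := by
        rw [hz, Matrix.mulVec_mulVec, ← pow_succ']
        have : m - 1 + 1 = m := by omega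
        rw [this, hm0]
      have heigz : A *ᵥ z = μ • z := by
        have h1 : (A - μ • 1) *ᵥ z = 0 := by rw [← hB]; exact hBz
        rw [Matrix.sub_mulVec, Matrix.smul_mulVec, Matrix.one_mulVec,
          sub_eq_zero] at h1
        exact h1
      have := eig_norm_le hM0 hM1 hzne heigz
      linarith
    rw [hy0]
    simp only [Matrix.mulVec_zero, sub_zero]
    exact tendsto_const_nhds

end Key

section Accept

variable {M : Matrix (Fin n) (Fin n) ℝ}

lemma accept_diff_tendsto (hM0 : ∀ i j, 0 ≤ M i j) (hM1 : ∀ i, ∑ j, M i j = 1)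
    (ini : Fin n → ℝ) (F : Finset (Fin n)) :
    Filter.Tendsto (fun k => (∑ i ∈ F, Matrix.vecMul ini (M ^ (k + Nat.factorial n)) i)
      - ∑ i ∈ F, Matrix.vecMul ini (M ^ k) i) Filter.atTop (nhds 0) := by
  set d := Nat.factorial n with hd
  have hentry : ∀ (l i : Fin n),
      Filter.Tendsto (fun k => (M ^ (k + d)) l i - (M ^ k) l i) Filter.atTop (nhds 0) := by
    intro l i
    have hkey := key_tendsto hM0 hM1 (Pi.single i 1)
    have hcomp := (tendsto_pi_nhds.mp hkey) l
    rw [show ((0 : Fin n → ℂ) l) = 0 from rfl] at hcomp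
    have hval : ∀ k, (((M.map (Complex.ofRealHom : ℝ → ℂ)) ^ k) *ᵥ (Pi.single i 1)) l
        = (((M ^ k) l i : ℝ) : ℂ) := by
      intro k
      rw [cmplx_pow, Matrix.mulVec_single]
      simp [Matrix.map_apply]
    rw [tendsto_zero_iff_norm_tendsto_zero]
    have hnorm := tendsto_zero_iff_norm_tendsto_zero.mp hcomp
    apply hnorm.congr
    intro k
    rw [Pi.sub_apply, hval, hval, ← Complex.ofReal_sub, Complex.norm_real]
  have hsum : Filter.Tendsto
      (fun k => ∑ i ∈ F, ∑ l, ini l * ((M ^ (k + d)) l i - (M ^ k) l i))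
      Filter.atTop (nhds (∑ i ∈ F, ∑ l : Fin n, ini l * 0)) := by
    apply tendsto_finset_sum
    intro i _
    apply tendsto_finset_sum
    intro l _
    exact (hentry l i).const_mul (ini l)
  simp only [mul_zero, Finset.sum_const_zero] at hsum
  apply hsum.congr
  intro k
  rw [← Finset.sum_sub_distrib]
  apply Finset.sum_congr rfl
  intro i _
  simp only [Matrix.vecMul, dotProduct, mul_sub]
  rw [Finset.sum_sub_distrib]

end Accept


/-- A one-way probabilistic finite automaton (PFA) with `n` states over the
unary alphabet `{a}` solves the promise problem `(Ayes, Ano)` with error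
probability `ε`: there are an initial probability distribution `ini`, a
row-stochastic transition matrix `M` and a set `F` of accepting states such
that every yes-instance `a^k` is accepted with probability
`ini · M^k · η_F ≥ 1 − ε` and every no-instance is accepted with probability
`≤ ε`. -/
def PFASolves (n : ℕ) (Ayes Ano : Set (List Unit)) (ε : ℝ) : Prop :=
  ∃ (ini : Fin n → ℝ) (M : Matrix (Fin n) (Fin n) ℝ) (F : Finset (Fin n)),
    (∀ i, 0 ≤ ini i) ∧ (∑ i, ini i = 1) ∧
    (∀ i j, 0 ≤ M i j) ∧ (∀ i, ∑ j, M i j = 1) ∧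
    (∀ w ∈ Ayes, 1 - ε ≤ ∑ i ∈ F, Matrix.vecMul ini (M ^ w.length) i) ∧
    (∀ w ∈ Ano, ∑ i ∈ F, Matrix.vecMul ini (M ^ w.length) i ≤ ε)

/-- `A_yes(p) = {a^k : cos²((k mod p)·π/p) ≥ 2/3}`. -/
def AyesP (p : ℕ) : Set (List Unit) :=
  {w | (2 : ℝ) / 3 ≤ Real.cos ((w.length % p : ℕ) * (Real.pi / p)) ^ 2}

/-- `A_no(p) = {a^k : cos²((k mod p)·π/p) ≤ 1/3}`. -/
def AnoP (p : ℕ) : Set (List Unit) :=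
  {w | Real.cos ((w.length % p : ℕ) * (Real.pi / p)) ^ 2 ≤ (1 : ℝ) / 3}

open Fin.NatCast in
/-- for a prime `p > 6`, there is a PFA with `p` states solving
`A(p)` exactly, and every PFA solving `A(p)` with error probability
`0 ≤ ε < 1/2` has at least `p` states: the minimal PFA solving `A(p)` has
exactly `p` states. -/
lemma part1 (p : ℕ) (hp : p.Prime) (hp6 : 6 < p) :
    PFASolves p (AyesP p) (AnoP p) 0 := by
  classical
  haveI : NeZero p := ⟨by omega⟩
  set Mm : Matrix (Fin p) (Fin p) ℝ := Matrix.of (fun i j => if j = i + 1 then (1:ℝ) else 0)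
    with hMm
  set ini : Fin p → ℝ := fun i => if i = 0 then 1 else 0 with hini
  set F : Finset (Fin p) :=
    Finset.univ.filter (fun i => (2:ℝ)/3 ≤ Real.cos ((i.val : ℝ) * (Real.pi / p)) ^ 2) with hF
  have hvm : ∀ k : ℕ, Matrix.vecMul ini (Mm ^ k) = fun j => if j = (k : Fin p) then (1:ℝ) else 0 := by
    intro k
    induction k with
    | zero =>
      rw [pow_zero, Matrix.vecMul_one]
      funext j
      rw [hini]
      norm_num
    | succ k ih =>
      rw [pow_succ, ← Matrix.vecMul_vecMul, ih]
      funext j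
      have h1 : ∑ i, (if i = (k : Fin p) then (1:ℝ) else 0) * Mm i j
          = Mm (k : Fin p) j := by
        rw [Finset.sum_congr rfl (fun i _ => by rw [ite_mul, one_mul, zero_mul])]
        rw [Finset.sum_ite_eq' Finset.univ ((k : Fin p)) (fun i => Mm i j)]
        simp
      calc Matrix.vecMul (fun j => if j = (k : Fin p) then (1:ℝ) else 0) Mm j
          = ∑ i, (if i = (k : Fin p) then (1:ℝ) else 0) * Mm i j := rfl
        _ = Mm (k : Fin p) j := h1
        _ = if j = ((k+1 : ℕ) : Fin p) then (1:ℝ) else 0 := by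
            rw [hMm]
            simp only [Matrix.of_apply]
            rw [Nat.cast_add, Nat.cast_one]
  have hacc : ∀ k : ℕ, ∑ i ∈ F, Matrix.vecMul ini (Mm ^ k) i
      = if ((k : Fin p)) ∈ F then (1:ℝ) else 0 := by
    intro k
    rw [hvm k]
    exact Finset.sum_ite_eq' F ((k : Fin p)) (fun _ => (1:ℝ))
  refine ⟨ini, Mm, F, ?_, ?_, ?_, ?_, ?_, ?_⟩
  · intro i; rw [hini]; dsimp only; split <;> norm_num
  · rw [hini]
    simp
  · intro i j; rw [hMm]; simp only [Matrix.of_apply]; split <;> norm_num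
  · intro i
    rw [hMm]
    simp only [Matrix.of_apply]
    rw [Finset.sum_ite_eq' Finset.univ (i+1) (fun _ => (1:ℝ))]
    simp
  · intro w hw
    rw [hacc]
    have hmem : ((w.length : Fin p)) ∈ F := by
      rw [hF, Finset.mem_filter]
      refine ⟨Finset.mem_univ _, ?_⟩
      rw [Fin.val_natCast]
      exact hw
    rw [if_pos hmem]
    norm_num
  · intro w hw
    rw [hacc]
    have hmem : ((w.length : Fin p)) ∉ F := by
      rw [hF, Finset.mem_filter]
      rintro ⟨-, hcond⟩
      rw [Fin.val_natCast] at hcond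
      have := hw
      rw [AnoP, Set.mem_setOf_eq] at this
      linarith
    simp [hmem]

lemma part2 (p : ℕ) (hp : p.Prime) (hp6 : 6 < p) (ε : ℝ) (hε0 : 0 ≤ ε) (hεh : ε < 1 / 2)
    (m : ℕ) (hsolve : PFASolves m (AyesP p) (AnoP p) ε) : p ≤ m := by
  by_contra hlt
  push_neg at hlt
  obtain ⟨ini, M, F, hini0, hini1, hM0, hM1, hyes, hno⟩ := hsolve
  haveI : Fact p.Prime := ⟨hp⟩
  haveI : NeZero p := ⟨by omega⟩
  set d := Nat.factorial m with hd
  have hdpos : 0 < d := Nat.factorial_pos m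
  have hpd : ¬ (p ∣ d) := by
    intro hdvd
    have := hp.dvd_factorial.mp hdvd
    omega
  set f : ℕ → ℝ := fun k => ∑ i ∈ F, Matrix.vecMul ini (M ^ k) i with hf
  have htend : Filter.Tendsto (fun k => f (k + d) - f k) Filter.atTop (nhds 0) :=
    accept_diff_tendsto hM0 hM1 ini F
  set r0 : ℕ := (p - 1) / 2 with hr0
  have hodd : p % 2 = 1 := by
    rcases hp.eq_two_or_odd with h | h
    · omega
    · exact h
  have hr0a : 2 * r0 + 1 = p := by omega
  have hr0lt : r0 < p := by omega
  have hr0pos : 0 < r0 := by omega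
  -- choose t with t*d ≡ r0 mod p, 1 ≤ t < p
  have hdz : ((d : ZMod p)) ≠ 0 := by
    intro h
    exact hpd ((ZMod.natCast_eq_zero_iff d p).mp h)
  set tt : ℕ := (((r0 : ZMod p)) * ((d : ZMod p))⁻¹).val with htt
  have ht_lt : tt < p := ZMod.val_lt _
  have htd : (tt * d) % p = r0 := by
    have h1 : ((tt * d : ℕ) : ZMod p) = ((r0 : ℕ) : ZMod p) := by
      push_cast
      rw [htt, ZMod.natCast_rightInverse _]
      rw [mul_assoc, inv_mul_cancel₀ hdz, mul_one]
    have h2 := (ZMod.natCast_eq_natCast_iff _ _ _).mp h1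
    unfold Nat.ModEq at h2
    rw [Nat.mod_eq_of_lt hr0lt] at h2
    exact h2
  have ht1 : 1 ≤ tt := by
    by_contra h
    push_neg at h
    have ht0 : tt = 0 := by omega
    rw [ht0, zero_mul, Nat.zero_mod] at htd
    omega
  -- quantitative convergence
  have hδ : (0:ℝ) < (1 - 2*ε)/p := by
    apply div_pos (by linarith) (by exact_mod_cast (by omega : 0 < p))
  obtain ⟨K, hK⟩ := Metric.tendsto_atTop.mp htend ((1 - 2*ε)/p) hδ
  set k₁ := p * (K + 1) with hk₁
  have hk₁K : K ≤ k₁ := by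
    calc K ≤ K + 1 := Nat.le_succ K
      _ ≤ p * (K + 1) := Nat.le_mul_of_pos_left _ (by omega)
  have hk₁mod : k₁ % p = 0 := Nat.mul_mod_right p (K+1)
  set k₂ := k₁ + tt * d with hk₂
  have hk₂mod : k₂ % p = r0 := by
    rw [hk₂, Nat.add_mod, hk₁mod, htd, zero_add]
    exact Nat.mod_eq_of_lt hr0lt
  -- yes instance at k₁
  have hyes1 : 1 - ε ≤ f k₁ := by
    have hw : (List.replicate k₁ ()) ∈ AyesP p := by
      simp only [AyesP, Set.mem_setOf_eq, List.length_replicate, hk₁mod]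
      norm_num
    have h := hyes _ hw
    simpa [hf, List.length_replicate] using h
  -- no instance at k₂
  have hno2 : f k₂ ≤ ε := by
    have hcos : Real.cos ((r0 : ℝ) * (Real.pi / p)) ^ 2 ≤ 1/3 := by
      have hp7 : (7:ℝ) ≤ (p:ℝ) := by exact_mod_cast (by omega : 7 ≤ p)
      have hppos : (0:ℝ) < (p:ℝ) := by linarith
      have hcast : (r0 : ℝ) = (p : ℝ)/2 - 1/2 := by
        have : ((2 * r0 + 1 : ℕ) : ℝ) = (p : ℝ) := by exact_mod_cast hr0a
        push_cast at this
        linarith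
      have hang : (r0:ℝ) * (Real.pi / p) = Real.pi/2 - Real.pi/(2*p) := by
        rw [hcast]
        field_simp
      rw [hang, Real.cos_pi_div_two_sub]
      have hxpos : 0 < Real.pi/(2*p) := by positivity
      have hs1 : Real.sin (Real.pi/(2*p)) ≤ Real.pi/(2*p) := Real.sin_le (le_of_lt hxpos)
      have hs0 : 0 ≤ Real.sin (Real.pi/(2*p)) := by
        apply Real.sin_nonneg_of_nonneg_of_le_pi (le_of_lt hxpos)
        calc Real.pi/(2*p) ≤ Real.pi/1 := by
              apply div_le_div_of_nonneg_left Real.pi_pos.le (by norm_num) (by linarith)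
          _ = Real.pi := by norm_num
      have hπ : Real.pi < 3.15 := Real.pi_lt_d2
      have hbd : Real.pi/(2*p) ≤ 3.15/14 := by
        apply div_le_div₀ (by norm_num) (le_of_lt hπ) (by norm_num) (by linarith)
      nlinarith
    have hw : (List.replicate k₂ ()) ∈ AnoP p := by
      simp only [AnoP, Set.mem_setOf_eq, List.length_replicate, hk₂mod]
      exact hcos
    have h := hno _ hw
    simpa [hf, List.length_replicate] using h
  -- telescoping bound
  have htel : f k₂ - f k₁ = ∑ s ∈ Finset.range tt, (f (k₁ + (s+1) * d) - f (k₁ + s * d)) := by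
    rw [Finset.sum_range_sub (fun s => f (k₁ + s * d)) tt]
    simp [hk₂]
  have hbound : |f k₂ - f k₁| < 1 - 2*ε := by
    rw [htel]
    calc |∑ s ∈ Finset.range tt, (f (k₁ + (s+1) * d) - f (k₁ + s * d))|
        ≤ ∑ s ∈ Finset.range tt, |f (k₁ + (s+1) * d) - f (k₁ + s * d)| :=
          Finset.abs_sum_le_sum_abs _ _
      _ < ∑ _s ∈ Finset.range tt, (1 - 2*ε)/p := by
          apply Finset.sum_lt_sum_of_nonempty (Finset.nonempty_range_iff.mpr (by omega))
          intro s _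
          have harg : k₁ + (s+1) * d = (k₁ + s * d) + d := by ring
          rw [harg]
          have h1 := hK (k₁ + s * d) (by omega)
          rw [Real.dist_0_eq_abs] at h1
          exact h1
      _ = (tt : ℝ) * ((1 - 2*ε)/p) := by
          rw [Finset.sum_const, Finset.card_range, nsmul_eq_mul]
      _ ≤ (p : ℝ) * ((1 - 2*ε)/p) := by
          apply mul_le_mul_of_nonneg_right _ (le_of_lt hδ)
          exact_mod_cast le_of_lt ht_lt
      _ = 1 - 2*ε := by
          field_simp
  have hge : 1 - 2*ε ≤ |f k₂ - f k₁| := by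
    calc 1 - 2*ε ≤ f k₁ - f k₂ := by linarith
      _ ≤ |f k₁ - f k₂| := le_abs_self _
      _ = |f k₂ - f k₁| := abs_sub_comm _ _
  linarith

theorem minimal_pfa_has_p_states (p : ℕ) (hp : p.Prime) (hp6 : 6 < p) :
    PFASolves p (AyesP p) (AnoP p) 0 ∧
    ∀ ε : ℝ, 0 ≤ ε → ε < 1 / 2 →
      ∀ n : ℕ, PFASolves n (AyesP p) (AnoP p) ε → p ≤ n := by
  exact ⟨part1 p hp hp6, fun ε hε0 hεh n hs => part2 p hp hp6 ε hε0 hεh n hs⟩
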